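/- (Conjugate of the α-divergence generator.) Let α > 1 and define f_α : [0,∞) → ℝ by f_α(t) = (t^α − 1 − α(t − 1))/(α(α − 1)). Then f_α(1) = 0, f_α is convex on [0,∞), and for every s ∈ ℝ with 1 + (α − 1)s > 0, sup_{t ≥ 0} (t·s − f_α(t)) = (1/α)·((1 + (α − 1)s)^{α/(α−1)} − 1). -/

import Mathlib

private lemma affine_convexOn (a b : ℝ) :
    ConvexOn ℝ (Set.Ici (0 : ℝ)) (fun x : ℝ => a * x + b) := by
  refine ⟨convex_Ici 0, fun x _ y _ p q hp hq hpq => le_of_eq ?_⟩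
  have hq1 : q = 1 - p := by linarith
  subst hq1
  simp only [smul_eq_mul]
  ring

/-- Conjugate of the α-divergence generator, for `α > 1`:
`f_α(t) = (t^α − 1 − α(t − 1))/(α(α − 1))` satisfies `f_α(1) = 0`, is convex on `[0,∞)`,
and for every `s` with `1 + (α − 1)s > 0`,
`sup_{t ≥ 0} (t s − f_α(t)) = (1/α)((1 + (α − 1)s)^{α/(α−1)} − 1)`. -/
theorem alpha_divergence_conjugate (α : ℝ) (hα : 1 < α) :
    (fun t : ℝ => (t ^ α - 1 - α * (t - 1)) / (α * (α - 1))) 1 = 0 ∧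
    ConvexOn ℝ (Set.Ici (0 : ℝ))
      (fun t : ℝ => (t ^ α - 1 - α * (t - 1)) / (α * (α - 1))) ∧
    (∀ s : ℝ, 0 < 1 + (α - 1) * s →
      sSup {v : ℝ | ∃ t : ℝ, 0 ≤ t ∧
          v = t * s - (t ^ α - 1 - α * (t - 1)) / (α * (α - 1))} =
        (1 / α) * ((1 + (α - 1) * s) ^ (α / (α - 1)) - 1)) := by
  have hα0 : (0 : ℝ) < α := lt_trans one_pos hα
  have hα1 : (0 : ℝ) < α - 1 := sub_pos.2 hα
  have hc : (0 : ℝ) < α * (α - 1) := mul_pos hα0 hα1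
  refine ⟨by simp [Real.one_rpow], ?_, ?_⟩
  · -- convexity
    have h1 : ConvexOn ℝ (Set.Ici (0 : ℝ)) (fun x : ℝ => x ^ α) := convexOn_rpow hα.le
    have h2 := (h1.smul (le_of_lt (inv_pos.2 hc))).add
      (affine_convexOn (-α / (α * (α - 1))) ((α - 1) / (α * (α - 1))))
    refine h2.congr ?_
    intro t _
    simp only [smul_eq_mul, Pi.add_apply]
    field_simp
    ring
  · intro s hs
    set u : ℝ := 1 + (α - 1) * s with hu_def
    set A : ℝ := u ^ (α / (α - 1)) with hA_def
    set T : ℝ := u ^ ((α - 1)⁻¹) with hT_def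
    have hss : s = (u - 1) / (α - 1) := by rw [hu_def]; field_simp; ring
    have hT0 : 0 ≤ T := Real.rpow_nonneg hs.le _
    have hTα : T ^ α = A := by
      rw [hT_def, hA_def, ← Real.rpow_mul hs.le]
      congr 1
      field_simp
    have hTu : T * u = A := by
      rw [hT_def, hA_def]
      calc u ^ ((α - 1)⁻¹) * u = u ^ ((α - 1)⁻¹) * u ^ (1 : ℝ) := by rw [Real.rpow_one]
        _ = u ^ ((α - 1)⁻¹ + 1) := (Real.rpow_add hs _ _).symm
        _ = u ^ (α / (α - 1)) := by congr 1; field_simp; ring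
    have hpq : α.HolderConjugate (α / (α - 1)) := Real.HolderConjugate.conjExponent hα
    have hmem : (1 / α) * (A - 1) = T * s - (T ^ α - 1 - α * (T - 1)) / (α * (α - 1)) := by
      rw [hTα, hss]
      field_simp
      linear_combination (-α) * hTu
    refine IsGreatest.csSup_eq ⟨⟨T, hT0, hmem⟩, ?_⟩
    rintro v ⟨t, ht, rfl⟩
    have young := Real.young_inequality_of_nonneg ht hs.le hpq
    have hsum : t ^ α / α + A / (α / (α - 1)) = (t ^ α + (α - 1) * A) / α := by
      field_simp
    rw [hsum] at young
    have young2 : α * (t * u) ≤ t ^ α + (α - 1) * A := by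
      have := (le_div_iff₀ hα0).mp young
      linarith
    rw [← sub_nonneg, hss]
    have expand : (1 / α) * (A - 1) - (t * ((u - 1) / (α - 1)) -
        (t ^ α - 1 - α * (t - 1)) / (α * (α - 1))) =
        ((α - 1) * A + t ^ α - α * (t * u)) / (α * (α - 1)) := by
      field_simp
      ring
    rw [expand]
    apply div_nonneg _ hc.le
    linarith
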